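/- Let φ ∈ O_K[x] be Eisenstein of degree n with root α, ρ its ramification polynomial, and let β = α + γ·α^{m+1} with γ ∈ L = K(α), v(γ) = 0, m ∈ ℤ_{>0}, be another uniformizer of L with minimal polynomial ψ ∈ O_K[x]. Then: (a) Σ_{i=0}^{n−1} (φ_i − ψ_i)·β^i = α^n·ρ(γ·α^m); moreover if 0 ≤ j < n and j ≡ v_α(ρ(γα^m)) mod n, then φ_j − ψ_j = α^n·ρ(γα^m) up to higher-valuation terms, i.e. (φ_j − ψ_j) ∼ the term of minimal valuation; (b) if 0 ≤ k < n and k ≡ c mod n where c = min_{0≤i≤n}(v_α(ρ_i) + i·m), then residue( (φ_k − ψ_k) / (α^{n−k}·α^c) ) = S_m(γ̄), where S_m is the residual polynomial of the (−m)-component of the ramification polygon and γ̄ the residue of γ. -/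

import Mathlib

open Polynomial

namespace RamificationStmt19

variable {K L : Type*} [Field K] [Field L]

def IsEisenstein (v : AddValuation K (WithTop ℤ)) (φ : Polynomial K) : Prop :=
  φ.Monic ∧ (∀ i < φ.natDegree, ((1 : ℤ) : WithTop ℤ) ≤ v (φ.coeff i)) ∧
    v (φ.coeff 0) = ((1 : ℤ) : WithTop ℤ)

/-- Coefficients of the ramification polynomial `ρ(x) = φ(αx+α)/α^n`. -/
noncomputable def rho [Algebra K L] (φ : Polynomial K) (α : L) (n i : ℕ) : L :=
  ∑ k ∈ Finset.Icc i n, (Nat.choose k i : L) * (algebraMap K L (φ.coeff k)) * α ^ ((k : ℤ) - (n : ℤ))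

/-- The value `ρ(z)` of the ramification polynomial at `z ∈ L`. -/
noncomputable def rhoEval [Algebra K L] (φ : Polynomial K) (α : L) (n : ℕ) (z : L) : L :=
  ∑ i ∈ Finset.range (n + 1), rho φ α n i * z ^ i

/-- The valuation ring `O_L = {x | w(x) ≥ 0}`. -/
def vintegers (w : AddValuation L (WithTop ℤ)) : Subring L where
  carrier := {x | 0 ≤ w x}
  zero_mem' := by simp [AddValuation.map_zero]
  one_mem' := by simp [AddValuation.map_one]
  add_mem' := by
    intro a b ha hb
    exact le_trans (le_min ha hb) (w.map_add a b)
  neg_mem' := by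
    intro a ha
    simpa [AddValuation.map_neg] using ha
  mul_mem' := by
    intro a b ha hb
    simp only [Set.mem_setOf_eq] at *
    rw [w.map_mul]
    exact add_nonneg ha hb

open scoped Classical in
/-- Reduction modulo the maximal ideal, extended by `0` outside the valuation ring. -/
noncomputable def vred {𝕜 : Type*} [Field 𝕜] (w : AddValuation L (WithTop ℤ))
    (res : vintegers w →+* 𝕜) (x : L) : 𝕜 :=
  if h : x ∈ vintegers w then res ⟨x, h⟩ else 0

/-- The `α`-content exponent `c = min_{0 ≤ i ≤ n} (v_α(ρ_i) + i·m)` of `ρ(α^m x)`. -/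
noncomputable def contExp [Algebra K L] (w : AddValuation L (WithTop ℤ)) (φ : Polynomial K)
    (α : L) (n m : ℕ) : WithTop ℤ :=
  (Finset.range (n + 1)).inf (fun i => w (rho φ α n i) + ((i * m : ℕ) : WithTop ℤ))

/-- The `α`-content exponent as an integer. -/
noncomputable def contExpZ [Algebra K L] (w : AddValuation L (WithTop ℤ)) (φ : Polynomial K)
    (α : L) (n m : ℕ) : ℤ :=
  WithTop.untopD 0 (contExp w φ α n m)

/-- The residual polynomial `S_m(x) = red(ρ(α^m x)/α^c)` of the `(−m)`-component of the
ramification polygon. -/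
noncomputable def SmPoly {𝕜 : Type*} [Field 𝕜] [Algebra K L] (w : AddValuation L (WithTop ℤ))
    (res : vintegers w →+* 𝕜) (φ : Polynomial K) (α : L) (n m : ℕ) : Polynomial 𝕜 :=
  ∑ i ∈ Finset.range (n + 1),
    Polynomial.C (vred w res (rho φ α n i * α ^ ((i * m : ℤ) - contExpZ w φ α n m))) *
      Polynomial.X ^ i

end RamificationStmt19

namespace Stmt19Aux
open RamificationStmt19

lemma coe_nsmul_wt (n : ℕ) (a : ℤ) : n • ((a : WithTop ℤ)) = (((n : ℤ) * a : ℤ) : WithTop ℤ) := by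
  induction n with
  | zero => simp
  | succ k ih => rw [succ_nsmul, ih]; norm_cast; push_cast; ring

lemma nsmul_top_wt {n : ℕ} (hn : 0 < n) : n • (⊤ : WithTop ℤ) = ⊤ := by
  cases n with
  | zero => omega
  | succ k => rw [succ_nsmul]; simp

variable {L : Type*} [Field L] (w : AddValuation L (WithTop ℤ))

lemma ne_zero_of_w {α : L} {t : ℤ} (hα : w α = (t : WithTop ℤ)) : α ≠ 0 := by
  intro h; rw [h, w.map_zero] at hα; exact WithTop.top_ne_coe hα

lemma w_zpow {α : L} (hα : w α = ((1 : ℤ) : WithTop ℤ)) (t : ℤ) :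
    w (α ^ t) = (t : WithTop ℤ) := by
  have hα0 : α ≠ 0 := ne_zero_of_w w hα
  obtain ⟨s, rfl | rfl⟩ := Int.eq_nat_or_neg t
  · rw [zpow_natCast, w.map_pow, hα, coe_nsmul_wt]; norm_num
  · rw [zpow_neg, w.map_inv, zpow_natCast, w.map_pow, hα, coe_nsmul_wt]
    push_cast
    simp

lemma w_sum_inf {ι : Type*} {s : Finset ι} {f : ι → L}
    (h : ∀ i ∈ s, ∀ j ∈ s, i ≠ j → w (f i) = w (f j) → w (f i) = ⊤) :
    w (∑ i ∈ s, f i) = s.inf fun i => w (f i) := by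
  classical
  by_cases htop : s.inf (fun i => w (f i)) = ⊤
  · have hz : ∀ i ∈ s, f i = 0 := by
      intro i hi
      have := Finset.inf_le (f := fun i => w (f i)) hi
      rw [htop, top_le_iff] at this
      exact w.top_iff.mp this
    rw [Finset.sum_eq_zero hz, w.map_zero, htop]
  · have hne : s.Nonempty := by
      rcases Finset.eq_empty_or_nonempty s with rfl | hne
      · simp at htop
      · exact hne
    obtain ⟨j, hj, hinf⟩ := Finset.exists_mem_eq_inf s hne (fun i => w (f i))
    rw [← Finset.add_sum_erase s f hj]
    rw [AddValuation.map_add_eq_of_lt_left, hinf]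
    rw [hinf] at htop
    obtain ⟨t, ht⟩ := WithTop.ne_top_iff_exists.mp htop
    refine AddValuation.map_lt_sum w (by rw [← ht]; exact WithTop.coe_ne_top) ?_
    intro i hi
    have his := Finset.mem_of_mem_erase hi
    have hij : i ≠ j := Finset.ne_of_mem_erase hi
    have hle : w (f j) ≤ w (f i) := hinf ▸ Finset.inf_le his
    rcases lt_or_eq_of_le hle with hlt | heq
    · exact hlt
    · exact absurd (((h i his j hj hij heq.symm).symm.trans heq.symm).symm) htop

variable {𝕜 : Type*} [Field 𝕜] (res : vintegers w →+* 𝕜)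

lemma vred_of_mem {x : L} (h : 0 ≤ w x) : vred w res x = res ⟨x, h⟩ := dif_pos h

lemma vred_one : vred w res 1 = 1 := by
  rw [vred_of_mem w res (x := 1) (by rw [w.map_one])]
  exact map_one res

lemma w_mul_nonneg {x y : L} (hx : 0 ≤ w x) (hy : 0 ≤ w y) : 0 ≤ w (x * y) := by
  rw [w.map_mul]; exact add_nonneg hx hy

lemma w_pow_nonneg {x : L} (hx : 0 ≤ w x) (i : ℕ) : 0 ≤ w (x ^ i) := by
  induction i with
  | zero => simp
  | succ k ih => rw [pow_succ]; exact w_mul_nonneg w ih hx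

lemma vred_mul {x y : L} (hx : 0 ≤ w x) (hy : 0 ≤ w y) :
    vred w res (x * y) = vred w res x * vred w res y := by
  rw [vred_of_mem w res hx, vred_of_mem w res hy, vred_of_mem w res (w_mul_nonneg w hx hy),
    ← map_mul]
  rfl

lemma vred_pow {x : L} (hx : 0 ≤ w x) (i : ℕ) : vred w res (x ^ i) = vred w res x ^ i := by
  induction i with
  | zero => simpa using vred_one w res
  | succ k ih => rw [pow_succ, vred_mul w res (w_pow_nonneg w hx k) hx, ih, pow_succ]

lemma vred_add {x y : L} (hx : 0 ≤ w x) (hy : 0 ≤ w y) :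
    vred w res (x + y) = vred w res x + vred w res y := by
  have hxy : 0 ≤ w (x + y) := le_trans (le_min hx hy) (w.map_add x y)
  rw [vred_of_mem w res hx, vred_of_mem w res hy, vred_of_mem w res hxy, ← map_add]
  rfl

lemma vred_sum {ι : Type*} {s : Finset ι} {f : ι → L} (h : ∀ i ∈ s, 0 ≤ w (f i)) :
    vred w res (∑ i ∈ s, f i) = ∑ i ∈ s, vred w res (f i) := by
  classical
  induction s using Finset.cons_induction with
  | empty =>
    rw [Finset.sum_empty, Finset.sum_empty, vred_of_mem w res (x := 0) (by simp)]
    exact map_zero res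
  | cons a s ha ih =>
    rw [Finset.sum_cons, Finset.sum_cons,
      vred_add w res (h a (Finset.mem_cons_self a s))
        (AddValuation.map_le_sum w fun i hi => h i (Finset.mem_cons_of_mem hi)),
      ih fun i hi => h i (Finset.mem_cons_of_mem hi)]

lemma vred_congr (hker : ∀ x : vintegers w, res x = 0 ↔ 0 < w (x : L)) {x y : L}
    (hx : 0 ≤ w x) (hy : 0 ≤ w y) (h : 0 < w (x - y)) : vred w res x = vred w res y := by
  have hsub : res (⟨x, hx⟩ - ⟨y, hy⟩) = 0 := (hker _).mpr h
  rw [map_sub] at hsub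
  rw [vred_of_mem w res hx, vred_of_mem w res hy]
  exact sub_eq_zero.mp hsub

lemma eq_of_small_dvd {n i j : ℕ} (hi : i < n) (hj : j < n)
    (hd : (n : ℤ) ∣ ((i : ℤ) - j)) : i = j := by
  have h0 : ((i : ℤ) - j) = 0 := Int.eq_zero_of_abs_lt_dvd hd (abs_lt.mpr ⟨by omega, by omega⟩)
  omega

lemma keyIdentity {K L : Type*} [Field K] [Field L] [Algebra K L] (φ : Polynomial K) (n : ℕ)
    (hdeg : φ.natDegree = n) (α γ : L) (hα0 : α ≠ 0) (m : ℕ) :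
    α ^ n * rhoEval φ α n (γ * α ^ m) = Polynomial.aeval (α + γ * α ^ (m+1)) φ := by
  have hcol : ∀ k : ℕ, α ^ n * α ^ ((k:ℤ) - (n:ℤ)) = α ^ k := fun k => by
    rw [← zpow_natCast α n, ← zpow_add₀ hα0, ← zpow_natCast α k]
    congr 1
    ring
  have h1 : α ^ n * rhoEval φ α n (γ * α ^ m)
      = ∑ i ∈ Finset.range (n+1), ∑ k ∈ Finset.Icc i n,
          (k.choose i : L) * algebraMap K L (φ.coeff k) * α ^ k * (γ * α ^ m) ^ i := by
    rw [rhoEval, Finset.mul_sum]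
    refine Finset.sum_congr rfl fun i _ => ?_
    rw [rho, Finset.sum_mul, Finset.mul_sum]
    refine Finset.sum_congr rfl fun k _ => ?_
    have hc := hcol k
    generalize hy : α ^ ((k:ℤ) - (n:ℤ)) = y at hc ⊢
    rw [← hc]
    ring
  have h2 : (∑ i ∈ Finset.range (n+1), ∑ k ∈ Finset.Icc i n,
          (k.choose i : L) * algebraMap K L (φ.coeff k) * α ^ k * (γ * α ^ m) ^ i)
      = ∑ k ∈ Finset.range (n+1), ∑ i ∈ Finset.range (k+1),
          (k.choose i : L) * algebraMap K L (φ.coeff k) * α ^ k * (γ * α ^ m) ^ i := by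
    refine Finset.sum_comm' ?_
    intro i k
    simp only [Finset.mem_range, Finset.mem_Icc]
    omega
  have h3 : ∀ k : ℕ, (∑ i ∈ Finset.range (k+1),
        (k.choose i : L) * algebraMap K L (φ.coeff k) * α ^ k * (γ * α ^ m) ^ i)
      = algebraMap K L (φ.coeff k) * (α + γ * α ^ (m+1)) ^ k := by
    intro k
    have hadd : (γ * α ^ m + 1) ^ k
        = ∑ i ∈ Finset.range (k+1), (γ * α ^ m) ^ i * 1 ^ (k - i) * (k.choose i : L) :=
      add_pow _ 1 k
    have hh : algebraMap K L (φ.coeff k) * (α + γ * α ^ (m+1)) ^ k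
        = algebraMap K L (φ.coeff k) * α ^ k * (γ * α ^ m + 1) ^ k := by
      rw [mul_assoc, ← mul_pow]
      congr 2
      ring
    rw [hh, hadd, Finset.mul_sum]
    refine Finset.sum_congr rfl fun i _ => ?_
    simp only [one_pow, mul_one]
    ring
  rw [h1, h2]
  rw [Polynomial.aeval_eq_sum_range, hdeg]
  refine Finset.sum_congr rfl fun k _ => ?_
  rw [h3 k, Algebra.smul_def]

end Stmt19Aux


open RamificationStmt19 in
/-- **Monge's deformation.** Let `φ ∈ O_K[x]` be Eisenstein of degree `n` with
root `α`, `ρ` its ramification polynomial, and let `β = α + γ·α^{m+1}` with `v(γ) = 0`,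
`m ∈ ℤ_{>0}`, be another uniformizer of `L = K(α)` with minimal polynomial `ψ`.  Then:
(a) `∑_{i=0}^{n−1} (φ_i − ψ_i)·β^i = α^n·ρ(γα^m)`; moreover if `0 ≤ j < n` and
`j ≡ v_α(ρ(γα^m)) mod n`, then `(φ_j − ψ_j)·β^j ∼ α^n·ρ(γα^m)` (equal up to higher-valuation
terms);
(b) if `0 ≤ k < n` and `k ≡ c mod n`, where `c = min_{0≤i≤n}(v_α(ρ_i) + i·m)`, then
`residue((φ_k − ψ_k)/(α^{n−k}·α^c)) = S_m(γ̄)`. -/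
theorem stmt19 {p : ℕ} (hp : p.Prime) {K L 𝕜 : Type*} [Field K] [CharZero K] [Field L]
    [Field 𝕜] [Algebra K L]
    (v : AddValuation K (WithTop ℤ)) (π : K) (hπ : v π = ((1 : ℤ) : WithTop ℤ))
    (hresidue_char : 0 < v (p : K))
    (w : AddValuation L (WithTop ℤ))
    (res : vintegers w →+* 𝕜) (hres_surj : Function.Surjective res)
    (hres_ker : ∀ x : vintegers w, res x = 0 ↔ 0 < w (x : L))
    (φ : Polynomial K) (n : ℕ) (hn : 0 < n) (hdeg : φ.natDegree = n)
    (hEis : IsEisenstein v φ)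
    (α : L) (hroot : Polynomial.aeval α φ = 0) (hα : w α = ((1 : ℤ) : WithTop ℤ))
    (hgen : Algebra.adjoin K {α} = ⊤) (hfinrank : Module.finrank K L = n)
    (hcompat : ∀ x : K, w (algebraMap K L x) = n • v x)
    (γ : L) (hγ : w γ = (0 : WithTop ℤ)) (m : ℕ) (hm : 0 < m)
    (β : L) (hβ : β = α + γ * α ^ (m + 1))
    (ψ : Polynomial K) (hψ : ψ = minpoly K β) :
    -- (a)
    ((∑ i ∈ Finset.range n, algebraMap K L (φ.coeff i - ψ.coeff i) * β ^ i =
        α ^ n * rhoEval φ α n (γ * α ^ m)) ∧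
      (∀ j < n, ∀ c : ℤ, w (rhoEval φ α n (γ * α ^ m)) = (c : WithTop ℤ) →
        (j : ℤ) ≡ c [ZMOD (n : ℤ)] →
        w (α ^ n * rhoEval φ α n (γ * α ^ m)) <
          w (algebraMap K L (φ.coeff j - ψ.coeff j) * β ^ j -
              α ^ n * rhoEval φ α n (γ * α ^ m)))) ∧
    -- (b)
    (∀ k < n, (k : ℤ) ≡ contExpZ w φ α n m [ZMOD (n : ℤ)] →
      vred w res (algebraMap K L (φ.coeff k - ψ.coeff k) *
          α ^ (-(((n : ℤ) - k) + contExpZ w φ α n m))) =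
        (SmPoly w res φ α n m).eval (vred w res γ)) := by
  classical
  have hα0 : α ≠ 0 := Stmt19Aux.ne_zero_of_w w hα
  have hwz : w (γ * α ^ m) = ((m : ℤ) : WithTop ℤ) := by
    rw [w.map_mul, hγ, w.map_pow, hα, Stmt19Aux.coe_nsmul_wt, zero_add, mul_one]
  have hwβ : w β = ((1 : ℤ) : WithTop ℤ) := by
    rw [hβ, AddValuation.map_add_eq_of_lt_left, hα]
    rw [hα, w.map_mul, w.map_pow, hα, hγ, Stmt19Aux.coe_nsmul_wt, zero_add, mul_one,
      WithTop.coe_lt_coe]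
    push_cast
    omega
  have hwcoe : ∀ (x : K) (i : ℕ), w (algebraMap K L x * β ^ i) = ⊤ ∨
      ∃ t : ℤ, w (algebraMap K L x * β ^ i) = (((n : ℤ) * t + i : ℤ) : WithTop ℤ) := by
    intro x i
    rw [w.map_mul, w.map_pow, hwβ, hcompat, Stmt19Aux.coe_nsmul_wt, mul_one]
    cases hvx : v x with
    | top => left; rw [Stmt19Aux.nsmul_top_wt hn, top_add]
    | coe t =>
      right
      refine ⟨t, ?_⟩
      rw [Stmt19Aux.coe_nsmul_wt, ← WithTop.coe_add]
  have hdist : ∀ (x y : K) {i j : ℕ}, i < n → j < n → i ≠ j →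
      w (algebraMap K L x * β ^ i) = w (algebraMap K L y * β ^ j) →
      w (algebraMap K L x * β ^ i) = ⊤ := by
    intro x y i j hi hj hij heq
    rcases hwcoe x i with h1 | ⟨t, h1⟩
    · exact h1
    rcases hwcoe y j with h2 | ⟨s, h2⟩
    · exact heq.trans h2
    · exfalso
      rw [h1, h2] at heq
      have hE := WithTop.coe_inj.mp heq
      exact hij (Stmt19Aux.eq_of_small_dvd hi hj ⟨s - t, by linear_combination hE⟩)
  haveI : FiniteDimensional K L := FiniteDimensional.of_finrank_pos (by rw [hfinrank]; exact hn)
  have hint : IsIntegral K β := IsIntegral.of_finite K β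
  have hψm : ψ.Monic := by rw [hψ]; exact minpoly.monic hint
  have haevψ : Polynomial.aeval β ψ = 0 := by rw [hψ]; exact minpoly.aeval K β
  have hψdle : ψ.natDegree ≤ n := by
    rw [hψ]
    exact (minpoly.natDegree_le β).trans (le_of_eq hfinrank)
  have hψd : ψ.natDegree = n := by
    by_contra hne
    have hdlt := lt_of_le_of_ne hψdle hne
    have h0 : (0 : L) = ∑ i ∈ Finset.range (ψ.natDegree + 1),
        algebraMap K L (ψ.coeff i) * β ^ i := by
      rw [← haevψ, Polynomial.aeval_eq_sum_range]
      exact Finset.sum_congr rfl fun i _ => Algebra.smul_def _ _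
    have hws := Stmt19Aux.w_sum_inf w (s := Finset.range (ψ.natDegree + 1))
      (f := fun i => algebraMap K L (ψ.coeff i) * β ^ i) ?_
    · rw [← h0, w.map_zero] at hws
      have hle := Finset.inf_le (f := fun i => w (algebraMap K L (ψ.coeff i) * β ^ i))
        (Finset.self_mem_range_succ ψ.natDegree)
      rw [← hws, top_le_iff] at hle
      have hvd : w (algebraMap K L (ψ.coeff ψ.natDegree) * β ^ ψ.natDegree)
          = ((ψ.natDegree : ℤ) : WithTop ℤ) := by
        rw [hψm.coeff_natDegree, map_one, one_mul, w.map_pow, hwβ, Stmt19Aux.coe_nsmul_wt,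
          mul_one]
      have hle' : w (algebraMap K L (ψ.coeff ψ.natDegree) * β ^ ψ.natDegree) = ⊤ := hle
      rw [hvd] at hle'
      exact WithTop.coe_ne_top hle'
    · intro i hi j hj hij
      exact hdist _ _ (lt_of_lt_of_le (Finset.mem_range.mp hi) hdlt)
        (lt_of_lt_of_le (Finset.mem_range.mp hj) hdlt) hij
  have hψcn : ψ.coeff n = 1 := by rw [← hψd]; exact hψm.coeff_natDegree
  have hφcn : φ.coeff n = 1 := by rw [← hdeg]; exact hEis.1.coeff_natDegree
  set f : ℕ → L := fun i => algebraMap K L (φ.coeff i - ψ.coeff i) * β ^ i with hfdef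
  have key : (∑ i ∈ Finset.range n, f i) = α ^ n * rhoEval φ α n (γ * α ^ m) := by
    have h1 : ∑ i ∈ Finset.range (n+1), f i
        = Polynomial.aeval β φ - Polynomial.aeval β ψ := by
      rw [Polynomial.aeval_eq_sum_range, Polynomial.aeval_eq_sum_range, hdeg, hψd,
        ← Finset.sum_sub_distrib]
      refine Finset.sum_congr rfl fun i _ => ?_
      rw [hfdef]
      simp only [map_sub, Algebra.smul_def]
      ring
    rw [Finset.sum_range_succ, hfdef] at h1
    simp only [hφcn, hψcn, sub_self, map_zero, zero_mul, add_zero] at h1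
    rw [← hfdef] at h1
    rw [h1, haevψ, sub_zero, hβ, ← Stmt19Aux.keyIdentity φ n hdeg α γ hα0 m]
  have hwsum : w (∑ i ∈ Finset.range n, f i) = (Finset.range n).inf (fun i => w (f i)) :=
    Stmt19Aux.w_sum_inf w (fun i hi j hj hij =>
      hdist _ _ (Finset.mem_range.mp hi) (Finset.mem_range.mp hj) hij)
  refine ⟨⟨key, ?_⟩, ?_⟩
  · -- part (a2)
    intro j hj c' hc' hmodj
    have htot : w (α ^ n * rhoEval φ α n (γ * α ^ m)) = (((n : ℤ) + c' : ℤ) : WithTop ℤ) := by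
      rw [w.map_mul, w.map_pow, hα, hc', Stmt19Aux.coe_nsmul_wt, mul_one, ← WithTop.coe_add]
    have hinf : (Finset.range n).inf (fun i => w (f i)) = (((n : ℤ) + c' : ℤ) : WithTop ℤ) := by
      rw [← hwsum, key, htot]
    have hstrict : ∀ i ∈ (Finset.range n).erase j,
        ((((n : ℤ) + c' : ℤ)) : WithTop ℤ) < w (f i) := by
      intro i hi
      have his := Finset.mem_of_mem_erase hi
      have hij : i ≠ j := Finset.ne_of_mem_erase hi
      have hge : ((((n : ℤ) + c' : ℤ)) : WithTop ℤ) ≤ w (f i) := hinf ▸ Finset.inf_le his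
      rcases lt_or_eq_of_le hge with h | h
      · exact h
      · exfalso
        rcases hwcoe (φ.coeff i - ψ.coeff i) i with h1 | ⟨t, h1⟩
        · exact WithTop.coe_ne_top (h.trans h1)
        · have hE := WithTop.coe_inj.mp (h.trans h1)
          obtain ⟨q, hq⟩ := Int.ModEq.dvd hmodj
          have hi' := Finset.mem_range.mp his
          exact hij (Stmt19Aux.eq_of_small_dvd hi' hj ⟨1 - t + q, by linear_combination hq - hE⟩)
    have hsplit : f j - α ^ n * rhoEval φ α n (γ * α ^ m)
        = -∑ i ∈ (Finset.range n).erase j, f i := by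
      rw [← key, ← Finset.add_sum_erase _ f (Finset.mem_range.mpr hj)]
      ring
    rw [hsplit, w.map_neg, htot]
    exact AddValuation.map_lt_sum w WithTop.coe_ne_top hstrict
  · -- part (b)
    intro k hk hmodk
    have hρn : rho φ α n n = 1 := by
      rw [rho, Finset.Icc_self, Finset.sum_singleton, Nat.choose_self, hφcn, map_one,
        Nat.cast_one, one_mul, one_mul, sub_self, zpow_zero]
    have hcne : contExp w φ α n m ≠ ⊤ := by
      intro htp
      have htp' : (Finset.range (n + 1)).inf
          (fun i => w (rho φ α n i) + ((i * m : ℕ) : WithTop ℤ)) = ⊤ := htp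
      have hle := Finset.inf_le (f := fun i => w (rho φ α n i) + ((i * m : ℕ) : WithTop ℤ))
        (Finset.self_mem_range_succ n)
      have hle' : w (rho φ α n n) + ((n * m : ℕ) : WithTop ℤ) = ⊤ :=
        top_le_iff.mp (htp' ▸ hle)
      rw [hρn, w.map_one, zero_add] at hle'
      simpa using hle'
    obtain ⟨c, hc⟩ := WithTop.ne_top_iff_exists.mp hcne
    have hcz : contExpZ w φ α n m = c := by rw [contExpZ, ← hc, WithTop.untopD_coe]
    have hcle : ∀ i ∈ Finset.range (n + 1),
        (c : WithTop ℤ) ≤ w (rho φ α n i) + ((i * m : ℕ) : WithTop ℤ) := by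
      intro i hi
      have h := Finset.inf_le (f := fun i => w (rho φ α n i) + ((i * m : ℕ) : WithTop ℤ)) hi
      rw [hc]
      exact h
    have hwzi : ∀ i : ℕ, w ((γ * α ^ m) ^ i) = ((i * m : ℕ) : WithTop ℤ) := by
      intro i
      rw [w.map_pow, hwz, Stmt19Aux.coe_nsmul_wt]
      norm_cast
    have hwT : (c : WithTop ℤ) ≤ w (rhoEval φ α n (γ * α ^ m)) := by
      refine AddValuation.map_le_sum w ?_
      intro i hi
      rw [w.map_mul, hwzi i]
      exact hcle i hi
    have htotle : (((n : ℤ) + c : ℤ) : WithTop ℤ) ≤ w (α ^ n * rhoEval φ α n (γ * α ^ m)) := by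
      rw [w.map_mul, w.map_pow, hα, Stmt19Aux.coe_nsmul_wt, mul_one, WithTop.coe_add]
      exact add_le_add_right hwT _
    have hallge : ∀ i ∈ Finset.range n, (((n : ℤ) + c : ℤ) : WithTop ℤ) ≤ w (f i) := by
      intro i hi
      refine le_trans ?_ (Finset.inf_le (f := fun i => w (f i)) hi)
      rw [← hwsum, key]
      exact htotle
    rw [hcz] at hmodk
    rw [hcz]
    have hstrict : ∀ i ∈ (Finset.range n).erase k,
        (((n : ℤ) + c : ℤ) : WithTop ℤ) < w (f i) := by
      intro i hi
      have his := Finset.mem_of_mem_erase hi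
      have hik : i ≠ k := Finset.ne_of_mem_erase hi
      rcases lt_or_eq_of_le (hallge i his) with h | h
      · exact h
      · exfalso
        rcases hwcoe (φ.coeff i - ψ.coeff i) i with h1 | ⟨t, h1⟩
        · exact WithTop.coe_ne_top (h.trans h1)
        · have hE := WithTop.coe_inj.mp (h.trans h1)
          obtain ⟨q, hq⟩ := Int.ModEq.dvd hmodk
          have hi' := Finset.mem_range.mp his
          exact hik (Stmt19Aux.eq_of_small_dvd hi' hk ⟨1 - t + q, by linear_combination hq - hE⟩)
    have hwgi : ∀ i ∈ Finset.range (n + 1), 0 ≤ w (rho φ α n i * α ^ ((i * m : ℤ) - c)) := by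
      intro i hi
      rw [w.map_mul, Stmt19Aux.w_zpow w hα]
      have h := hcle i hi
      cases hwi : w (rho φ α n i) with
      | top => rw [top_add]; exact le_top
      | coe t =>
        rw [hwi, ← WithTop.coe_natCast (α := ℤ) (i * m), ← WithTop.coe_add] at h
        rw [← WithTop.coe_add]
        rw [WithTop.coe_le_coe] at h
        rw [← WithTop.coe_zero, WithTop.coe_le_coe]
        push_cast at h ⊢
        linarith
    have hwu : w (1 + γ * α ^ m) = 0 := by
      rw [AddValuation.map_add_eq_of_lt_left, w.map_one]
      rw [w.map_one, hwz]
      exact_mod_cast (by exact_mod_cast hm : (0 : ℤ) < (m : ℤ))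
    have hwu0 : 0 ≤ w (1 + γ * α ^ m) := le_of_eq hwu.symm
    have hvredu : vred w res (1 + γ * α ^ m) = 1 := by
      have hdz : 0 < w (1 + γ * α ^ m - 1) := by
        have he : 1 + γ * α ^ m - 1 = γ * α ^ m := by ring
        rw [he, hwz]
        exact_mod_cast (by exact_mod_cast hm : (0 : ℤ) < (m : ℤ))
      rw [Stmt19Aux.vred_congr w res hres_ker hwu0 (le_of_eq (w.map_one).symm) hdz]
      exact Stmt19Aux.vred_one w res
    have hβu : β = α * (1 + γ * α ^ m) := by rw [hβ]; ring
    have hzp1 : α ^ ((k : ℤ)) * α ^ (-(n : ℤ) - c) = α ^ (-(((n : ℤ) - k) + c)) := by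
      rw [← zpow_add₀ hα0]
      congr 1
      ring
    have hXu : algebraMap K L (φ.coeff k - ψ.coeff k) * α ^ (-(((n : ℤ) - k) + c))
          * (1 + γ * α ^ m) ^ k
        = f k * α ^ (-(n : ℤ) - c) := by
      simp only [hfdef]
      rw [hβu, mul_pow, ← hzp1, ← zpow_natCast α k]
      ring
    have hTc : rhoEval φ α n (γ * α ^ m) * α ^ (-c : ℤ)
        = (α ^ n * rhoEval φ α n (γ * α ^ m)) * α ^ (-(n : ℤ) - c) := by
      rw [mul_comm (α ^ n), mul_assoc]
      congr 1
      rw [← zpow_natCast α n, ← zpow_add₀ hα0]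
      congr 1
      ring
    have hfkdiff : (((n : ℤ) + c : ℤ) : WithTop ℤ)
        < w (f k - α ^ n * rhoEval φ α n (γ * α ^ m)) := by
      have hsp : f k - α ^ n * rhoEval φ α n (γ * α ^ m)
          = -∑ i ∈ (Finset.range n).erase k, f i := by
        rw [← key, ← Finset.add_sum_erase _ f (Finset.mem_range.mpr hk)]
        ring
      rw [hsp, w.map_neg]
      exact AddValuation.map_lt_sum w WithTop.coe_ne_top hstrict
    have hdiff : 0 < w (algebraMap K L (φ.coeff k - ψ.coeff k) * α ^ (-(((n : ℤ) - k) + c))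
          * (1 + γ * α ^ m) ^ k
        - rhoEval φ α n (γ * α ^ m) * α ^ (-c : ℤ)) := by
      rw [hXu, hTc, ← sub_mul, w.map_mul, Stmt19Aux.w_zpow w hα]
      cases hA : w (f k - α ^ n * rhoEval φ α n (γ * α ^ m)) with
      | top => rw [top_add]; simp
      | coe a =>
        rw [hA, WithTop.coe_lt_coe] at hfkdiff
        rw [← WithTop.coe_add]
        exact_mod_cast (by omega : (0 : ℤ) < a + (-(n : ℤ) - c))
    have hwXge : 0 ≤ w (algebraMap K L (φ.coeff k - ψ.coeff k) * α ^ (-(((n : ℤ) - k) + c))) := by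
      rw [w.map_mul, Stmt19Aux.w_zpow w hα, hcompat]
      have hfk := hallge k (Finset.mem_range.mpr hk)
      simp only [hfdef] at hfk
      rw [w.map_mul, w.map_pow, hwβ, Stmt19Aux.coe_nsmul_wt, mul_one, hcompat] at hfk
      cases hvx : v (φ.coeff k - ψ.coeff k) with
      | top => rw [Stmt19Aux.nsmul_top_wt hn, top_add]; exact le_top
      | coe t =>
        rw [hvx, Stmt19Aux.coe_nsmul_wt, ← WithTop.coe_add, WithTop.coe_le_coe] at hfk
        rw [Stmt19Aux.coe_nsmul_wt, ← WithTop.coe_add, ← WithTop.coe_zero, WithTop.coe_le_coe]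
        linarith
    have hwTc : 0 ≤ w (rhoEval φ α n (γ * α ^ m) * α ^ (-c : ℤ)) := by
      rw [w.map_mul, Stmt19Aux.w_zpow w hα]
      cases hA : w (rhoEval φ α n (γ * α ^ m)) with
      | top => rw [top_add]; exact le_top
      | coe a =>
        rw [hA, WithTop.coe_le_coe] at hwT
        rw [← WithTop.coe_add, ← WithTop.coe_zero, WithTop.coe_le_coe]
        omega
    have hwuk : 0 ≤ w ((1 + γ * α ^ m) ^ k) := Stmt19Aux.w_pow_nonneg w hwu0 k
    have hchain1 : vred w res (algebraMap K L (φ.coeff k - ψ.coeff k)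
          * α ^ (-(((n : ℤ) - k) + c)))
        = vred w res (algebraMap K L (φ.coeff k - ψ.coeff k) * α ^ (-(((n : ℤ) - k) + c))
            * (1 + γ * α ^ m) ^ k) := by
      rw [Stmt19Aux.vred_mul w res hwXge hwuk, Stmt19Aux.vred_pow w res hwu0 k, hvredu,
        one_pow, mul_one]
    have hchain2 : vred w res (algebraMap K L (φ.coeff k - ψ.coeff k)
          * α ^ (-(((n : ℤ) - k) + c)) * (1 + γ * α ^ m) ^ k)
        = vred w res (rhoEval φ α n (γ * α ^ m) * α ^ (-c : ℤ)) :=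
      Stmt19Aux.vred_congr w res hres_ker (Stmt19Aux.w_mul_nonneg w hwXge hwuk) hwTc hdiff
    have hγ0 : 0 ≤ w γ := le_of_eq hγ.symm
    have hRHS : (SmPoly w res φ α n m).eval (vred w res γ)
        = vred w res (rhoEval φ α n (γ * α ^ m) * α ^ (-c : ℤ)) := by
      have hsum : rhoEval φ α n (γ * α ^ m) * α ^ (-c : ℤ)
          = ∑ i ∈ Finset.range (n + 1), rho φ α n i * α ^ ((i * m : ℤ) - c) * γ ^ i := by
        rw [rhoEval, Finset.sum_mul]
        refine Finset.sum_congr rfl fun i _ => ?_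
        have hsplit2 : α ^ ((i * m : ℤ) - c) = α ^ (m * i) * α ^ (-c : ℤ) := by
          rw [← zpow_natCast α (m * i), ← zpow_add₀ hα0]
          congr 1
          push_cast
          ring
        rw [mul_pow, ← pow_mul, hsplit2]
        ring
      rw [hsum, Stmt19Aux.vred_sum w res
        (fun i hi => Stmt19Aux.w_mul_nonneg w (hwgi i hi) (Stmt19Aux.w_pow_nonneg w hγ0 i))]
      rw [SmPoly, hcz, Polynomial.eval_finset_sum]
      refine Finset.sum_congr rfl fun i hi => ?_
      rw [Polynomial.eval_mul, Polynomial.eval_pow, Polynomial.eval_C, Polynomial.eval_X,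
        Stmt19Aux.vred_mul w res (hwgi i hi) (Stmt19Aux.w_pow_nonneg w hγ0 i),
        Stmt19Aux.vred_pow w res hγ0 i]
    rw [hRHS, hchain1]
    exact hchain2
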